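/- There exists a constant C > 0 such that for every locally solvable tuple a ∈ 𝕃^loc and every sufficiently large B, 𝔖_a(B) ≥ C. -/

import Mathlib

open Filter MeasureTheory Finset Topology
open scoped ENNReal

noncomputable section

/-- Euclidean norm of an integer quadruple. -/
def znorm (a : Fin 4 → ℤ) : ℝ := Real.sqrt (∑ i, ((a i : ℝ)) ^ 2)

/-- Euclidean norm of a natural-number quadruple. -/
def pnorm (x : Fin 4 → ℕ) : ℝ := Real.sqrt (∑ i, ((x i : ℝ)) ^ 2)

/-- Sup-norm `|a| = maxᵢ |aᵢ|` of an integer quadruple. -/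
def snorm (a : Fin 4 → ℤ) : ℕ := Finset.univ.sup fun i => (a i).natAbs

/-- Min of the absolute values of the coordinates. -/
def minAbs (a : Fin 4 → ℤ) : ℕ := Finset.univ.inf' Finset.univ_nonempty fun i => (a i).natAbs

/-- `a` is primitive: all coordinates nonzero and gcd of the coordinates is 1. -/
def IsPrimitive (a : Fin 4 → ℤ) : Prop := (∀ i, a i ≠ 0) ∧ Finset.univ.gcd a = 1

/-- `a` is locally solvable: it is primitive, its coordinates are not all of the same
sign, and for every prime `p` the congruence `⟨a,x⟩ ≡ 0 (mod p)` has a solution in the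
reduced residues mod `p`. -/
def IsLocSolv (a : Fin 4 → ℤ) : Prop :=
  IsPrimitive a ∧ ¬ ((∀ i, 0 < a i) ∨ (∀ i, a i < 0)) ∧
  ∀ p : ℕ, p.Prime → ∃ x : Fin 4 → (ZMod p)ˣ,
    ∑ i, (a i : ZMod p) * ((x i : (ZMod p)ˣ) : ZMod p) = 0

/-- The set `L(a)` of quadruples of primes solving `⟨a,p⟩ = 0`. -/
def Lsol (a : Fin 4 → ℤ) : Set (Fin 4 → ℕ) :=
  {p | (∀ i, (p i).Prime) ∧ ∑ i, a i * (p i : ℤ) = 0}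

/-- `𝔪(a)`: the minimum of `|p|` over prime solutions `p ∈ L(a)`, and `∞` if there is
no solution. -/
def mfrak (a : Fin 4 → ℤ) : ℝ≥0∞ :=
  ⨅ p ∈ Lsol a, ((Finset.univ.sup p : ℕ) : ℝ≥0∞)

/-- The condition `𝔪(a)³ ≤ |a|·(log |a|)⁴·(log log |a|)`. -/
def SmallSol (a : Fin 4 → ℤ) : Prop :=
  (mfrak a) ^ 3 ≤ ENNReal.ofReal ((snorm a : ℝ) * (Real.log (snorm a)) ^ 4 *
    Real.log (Real.log (snorm a)))

/-- `𝕃^loc(A)`. -/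
def LlocSet (A : ℝ) : Set (Fin 4 → ℤ) := {a | IsLocSolv a ∧ znorm a ≤ A}

/-- `𝕃(A)`. -/
def LSet (A : ℝ) : Set (Fin 4 → ℤ) := {a | IsPrimitive a ∧ znorm a ≤ A}

/-- `𝒫(B)`: quadruples of primes of sup-norm at most `B`. -/
def PP (B : ℝ) : Set (Fin 4 → ℕ) := {x | ∀ i, (x i).Prime ∧ (x i : ℝ) ≤ B}

/-- The counting function `N_a(B)`. -/
def NB (a : Fin 4 → ℤ) (B : ℝ) : ℝ :=
  (Real.log B) ^ 4 * (Set.ncard {x | x ∈ PP B ∧ ∑ i, a i * (x i : ℤ) = 0} : ℝ)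

/-- `w = log log B / log log log B`. -/
def wB (B : ℝ) : ℝ := Real.log (Real.log B) / Real.log (Real.log (Real.log B))

/-- `W = ∏_{p ≤ w} p^(⌈log w/log p⌉ + 1)`. -/
def WB (B : ℝ) : ℕ :=
  ∏ p ∈ Finset.filter Nat.Prime (Finset.range (⌊wB B⌋₊ + 1)),
    p ^ (⌈Real.log (wB B) / Real.log (p : ℝ)⌉₊ + 1)

/-- `rad(W) = ∏_{p ≤ w} p`. -/
def radWB (B : ℝ) : ℕ :=
  ∏ p ∈ Finset.filter Nat.Prime (Finset.range (⌊wB B⌋₊ + 1)), p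

/-- The local counting function `N_a^loc(B)`; the summation condition is
`a ∈ Λ_x^(W) ∩ 𝒞_x^(α)` with `α = log B`. -/
def NlocB (a : Fin 4 → ℤ) (B : ℝ) : ℝ :=
  (Real.log B) ^ 4 * (Real.log B * (WB B : ℝ) / znorm a) *
    ∑ᶠ x ∈ {x : Fin 4 → ℕ | x ∈ PP B ∧ ((WB B : ℤ) ∣ ∑ i, a i * (x i : ℤ)) ∧
      |∑ i, (x i : ℝ) * (a i : ℝ)| ≤ pnorm x * znorm a / (2 * Real.log B)},
      1 / pnorm x

/-- Gram determinant `‖u‖²‖v‖² − ⟨u,v⟩²` of a pair of real vectors. -/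
def gram2 (u v : Fin 4 → ℝ) : ℝ :=
  (∑ i, u i ^ 2) * (∑ i, v i ^ 2) - (∑ i, u i * v i) ^ 2

/-- Determinant of a rank-2 lattice `S ⊆ ℤ⁴`: for such a lattice it is the minimum of
`det(ℤu ⊕ ℤv) = √(‖u‖²‖v‖² − ⟨u,v⟩²)` over linearly independent pairs `u, v ∈ S`
(the minimum being attained precisely at bases of `S`). -/
def latDet2 (S : Set (Fin 4 → ℤ)) : ℝ :=
  sInf {d : ℝ | ∃ u ∈ S, ∃ v ∈ S,
    (∀ m n : ℤ, m • u + n • v = 0 → m = 0 ∧ n = 0) ∧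
    d = Real.sqrt (gram2 (fun i => (u i : ℝ)) (fun i => (v i : ℝ)))}

/-- `det(Λ_x ∩ Λ_y)` for quadruples of primes `x, y`. -/
def detXY (x y : Fin 4 → ℕ) : ℝ :=
  latDet2 {z | (∑ i, (x i : ℤ) * z i) = 0 ∧ (∑ i, (y i : ℤ) * z i) = 0}

/-- `Ω(B)`: pairs of distinct quadruples of primes of size at most `B`. -/
def OmegaB (B : ℝ) : Set ((Fin 4 → ℕ) × (Fin 4 → ℕ)) :=
  {p | p.1 ∈ PP B ∧ p.2 ∈ PP B ∧ p.1 ≠ p.2}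

/-- `E(B)`. -/
def EB (B : ℝ) : ℝ :=
  (Real.log B) ^ 8 * ∑ᶠ p ∈ OmegaB B, 1 / detXY p.1 p.2

/-- `𝒢(x,y)`: the gcd of the 2×2 minors of the matrix with columns `x, y`. -/
def Gcal (x y : Fin 4 → ℕ) : ℤ :=
  Finset.univ.gcd fun q : Fin 4 × Fin 4 =>
    (x q.1 : ℤ) * (y q.2 : ℤ) - (x q.2 : ℤ) * (y q.1 : ℤ)

/-- `Δ(x,y) = ‖x‖‖y‖/det(ℤx ⊕ ℤy)`. -/
def DeltaXY (x y : Fin 4 → ℕ) : ℝ :=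
  pnorm x * pnorm y / Real.sqrt (gram2 (fun i => (x i : ℝ)) (fun i => (y i : ℝ)))

/-- `ℰ_{x,y}(B) = min{1, Δ(x,y)²/α²} + 𝟏[𝒢(x,y) ∤ W/rad(W)]`. -/
def EcalXY (x y : Fin 4 → ℕ) (B : ℝ) : ℝ :=
  min 1 (DeltaXY x y ^ 2 / (Real.log B) ^ 2) +
  (if Gcal x y ∣ ((WB B / radWB B : ℕ) : ℤ) then 0 else 1)

/-- `F(B)`. -/
def FB (B : ℝ) : ℝ :=
  (Real.log B) ^ 8 * ∑ᶠ p ∈ OmegaB B, EcalXY p.1 p.2 B / detXY p.1 p.2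

/-- `ζ(2)`. -/
def zeta2 : ℝ := ∑' n : ℕ, (1 : ℝ) / (n + 1) ^ 2

/-- `{a ∈ ℤ⁴_prim : ‖a‖ ≤ A}` with `ℤ⁴_prim` the tuples of coprime coordinates. -/
def primA (A : ℝ) : Set (Fin 4 → ℤ) := {a | Finset.univ.gcd a = 1 ∧ znorm a ≤ A}

/-- `D(A,B)`. -/
def DAB (A B : ℝ) : ℝ :=
  (∑ᶠ a ∈ primA A, NB a B ^ 2) - (Real.log B) ^ 4 * ∑ᶠ a ∈ primA A, NB a B

/-- `Δ_a^mix(B)`. -/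
def DeltaMix (a : Fin 4 → ℤ) (B : ℝ) : ℝ :=
  (Real.log B) ^ 8 * (Real.log B * (WB B : ℝ) / znorm a) *
    ∑ᶠ x ∈ {x : Fin 4 → ℕ | x ∈ PP B ∧ ∑ i, a i * (x i : ℤ) = 0}, 1 / pnorm x

/-- `Δ_a^loc(B)`. -/
def DeltaLoc (a : Fin 4 → ℤ) (B : ℝ) : ℝ :=
  (Real.log B) ^ 8 * ((Real.log B) ^ 2 * (WB B : ℝ) ^ 2 / znorm a ^ 2) *
    ∑ᶠ x ∈ {x : Fin 4 → ℕ | x ∈ PP B ∧ ((WB B : ℤ) ∣ ∑ i, a i * (x i : ℤ)) ∧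
      |∑ i, (x i : ℝ) * (a i : ℝ)| ≤ pnorm x * znorm a / (2 * Real.log B)},
      1 / pnorm x ^ 2

/-- `D^mix(A,B)`. -/
def DmixAB (A B : ℝ) : ℝ :=
  (∑ᶠ a ∈ primA A, NB a B * NlocB a B) - ∑ᶠ a ∈ primA A, DeltaMix a B

/-- `D^loc(A,B)`. -/
def DlocAB (A B : ℝ) : ℝ :=
  (∑ᶠ a ∈ primA A, NlocB a B ^ 2) - ∑ᶠ a ∈ primA A, DeltaLoc a B

/-- `K(A,B)`. -/
def KAB (A B : ℝ) : ℝ :=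
  ∑ᶠ a ∈ primA A, ((Real.log B) ^ 4 * NB a B + DeltaMix a B + DeltaLoc a B)

/-- `τ(a,γ) = γ·vol({u ∈ 𝓑₄(1) ∩ ℝ⁴₊ : a ∈ 𝒞_u^(γ)})`. -/
def tauA (a : Fin 4 → ℤ) (γ : ℝ) : ℝ :=
  γ * (volume {u : Fin 4 → ℝ | Real.sqrt (∑ i, u i ^ 2) < 1 ∧ (∀ i, 0 < u i) ∧
      |∑ i, u i * (a i : ℝ)| ≤ Real.sqrt (∑ i, u i ^ 2) * znorm a / (2 * γ)}).toReal

/-- The singular integral `𝔍_a(B) = τ(a, log B)`. -/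
def Jfrak (a : Fin 4 → ℤ) (B : ℝ) : ℝ := tauA a (Real.log B)

/-- `σ(a,Q) = (Q/φ(Q)⁴)·#{b ∈ ((ℤ/Qℤ)^*)⁴ : ⟨a,b⟩ ≡ 0 mod Q}`. -/
def sigmaA (a : Fin 4 → ℤ) (Q : ℕ) : ℝ :=
  (Q : ℝ) / (Nat.totient Q : ℝ) ^ 4 *
    (Nat.card {b : Fin 4 → (ZMod Q)ˣ |
      ∑ i, (a i : ZMod Q) * ((b i : (ZMod Q)ˣ) : ZMod Q) = 0} : ℝ)

/-- The truncated singular series `𝔖_a(B) = σ(a, W)`. -/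
def Sfrak (a : Fin 4 → ℤ) (B : ℝ) : ℝ := sigmaA a (WB B)

end

namespace SSLB

def sol (Q : ℕ) (a : Fin 4 → ℤ) : Set (Fin 4 → (ZMod Q)ˣ) :=
  {b | ∑ i, (a i : ZMod Q) * ((b i : (ZMod Q)ˣ) : ZMod Q) = 0}

noncomputable def sigmaA' (a : Fin 4 → ℤ) (Q : ℕ) : ℝ :=
  (Q : ℝ) / (Nat.totient Q : ℝ) ^ 4 * (Nat.card (sol Q a) : ℝ)

noncomputable def solEquiv {m n : ℕ} (h : Nat.Coprime m n) (a : Fin 4 → ℤ) :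
    sol (m * n) a ≃ sol m a × sol n a := by
  classical
  let e : ZMod (m * n) ≃+* ZMod m × ZMod n := ZMod.chineseRemainder h
  let F : (ZMod (m * n))ˣ ≃ (ZMod m)ˣ × (ZMod n)ˣ :=
    (Units.mapEquiv e.toMulEquiv).toEquiv.trans MulEquiv.prodUnits.toEquiv
  let G : (Fin 4 → (ZMod (m*n))ˣ) ≃ (Fin 4 → (ZMod m)ˣ) × (Fin 4 → (ZMod n)ˣ) :=
    (Equiv.piCongrRight fun _ => F).trans (Equiv.arrowProdEquivProdArrow _ _ _)
  have key : ∀ b : Fin 4 → (ZMod (m*n))ˣ, b ∈ sol (m*n) a ↔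
      ((G b).1 ∈ sol m a ∧ (G b).2 ∈ sol n a) := by
    intro b
    have h1 : ∀ i, e ((b i : (ZMod (m*n))ˣ) : ZMod (m*n)) =
        ((((G b).1 i : (ZMod m)ˣ) : ZMod m), (((G b).2 i : (ZMod n)ˣ) : ZMod n)) := by
      intro i; rfl
    constructor
    · intro hb
      have : e (∑ i, (a i : ZMod (m*n)) * ((b i : (ZMod (m*n))ˣ) : ZMod (m*n))) = 0 := by
        rw [hb]; exact map_zero e
      rw [map_sum] at this
      simp only [map_mul, map_intCast, h1] at this
      constructor
      · have := congrArg Prod.fst this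
        simpa [sol, Prod.fst_sum, Prod.snd_sum] using this
      · have := congrArg Prod.snd this
        simpa [sol, Prod.fst_sum, Prod.snd_sum] using this
    · rintro ⟨h1', h2'⟩
      have : e (∑ i, (a i : ZMod (m*n)) * ((b i : (ZMod (m*n))ˣ) : ZMod (m*n))) = 0 := by
        rw [map_sum]
        simp only [map_mul, map_intCast, h1]
        rw [Prod.ext_iff]
        constructor
        · simpa [sol, Prod.fst_sum, Prod.snd_sum] using h1'
        · simpa [sol, Prod.fst_sum, Prod.snd_sum] using h2'
      exact e.injective (by rw [this, map_zero])
  exact ((Equiv.subtypeEquiv G (fun b => key b)).trans (Equiv.subtypeProdEquivProd))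

lemma card_sol_mul {m n : ℕ} (h : Nat.Coprime m n) (a : Fin 4 → ℤ) :
    Nat.card (sol (m * n) a) = Nat.card (sol m a) * Nat.card (sol n a) := by
  rw [Nat.card_congr (solEquiv h a), Nat.card_prod]


lemma sigmaA'_mul {m n : ℕ} (h : Nat.Coprime m n) (a : Fin 4 → ℤ) :
    sigmaA' a (m * n) = sigmaA' a m * sigmaA' a n := by
  unfold sigmaA'
  rw [Nat.totient_mul h, card_sol_mul h a]
  push_cast
  ring

lemma sigmaA'_prod (a : Fin 4 → ℤ) (s : Finset ℕ) (hs : ∀ p ∈ s, p.Prime) (e : ℕ → ℕ) :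
    sigmaA' a (∏ p ∈ s, p ^ e p) = ∏ p ∈ s, sigmaA' a (p ^ e p) := by
  classical
  induction s using Finset.induction_on with
  | empty =>
    rw [Finset.prod_empty, Finset.prod_empty]
    simp [sigmaA', sol]
    have : Subsingleton (ZMod 1) := inferInstanceAs (Subsingleton (Fin 1))
    rw [Finset.filter_true_of_mem (fun b _ i => Or.inl (Subsingleton.elim _ _)), Finset.card_singleton]
  | @insert p s' hp ih =>
    rw [Finset.prod_insert hp, Finset.prod_insert hp]
    have hpp : p.Prime := hs p (Finset.mem_insert_self p s')
    have hcop : (p ^ e p).Coprime (∏ q ∈ s', q ^ e q) := by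
      apply Nat.Coprime.pow_left
      apply Nat.Coprime.prod_right
      intro q hq
      exact Nat.Coprime.pow_right _ ((Nat.coprime_primes hpp (hs q (Finset.mem_insert_of_mem hq))).2
        (fun hpq => hp (hpq ▸ hq)))
    rw [sigmaA'_mul hcop, ih (fun q hq => hs q (Finset.mem_insert_of_mem hq))]

lemma nat_card_sigma {ι : Type*} [Fintype ι] (f : ι → Type*) [∀ i, Finite (f i)] :
    Nat.card ((i : ι) × f i) = ∑ i, Nat.card (f i) := by
  classical
  have : ∀ i, Fintype (f i) := fun i => Fintype.ofFinite (f i)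
  simp only [Nat.card_eq_fintype_card, Fintype.card_sigma]

variable {p k : ℕ}

lemma isUnit_of_cast_ne (hp : p.Prime) (hk : 1 ≤ k) (x : ZMod (p ^ k))
    (hx : ZMod.castHom (dvd_pow_self p (by omega : k ≠ 0)) (ZMod p) x ≠ 0) : IsUnit x := by
  haveI : NeZero (p ^ k) := ⟨pow_ne_zero _ hp.pos.ne'⟩
  have hv : ((x.val : ℕ) : ZMod (p ^ k)) = x := ZMod.natCast_rightInverse x
  rw [← hv]
  rw [ZMod.isUnit_iff_coprime]
  rw [Nat.coprime_pow_right_iff (by omega)]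
  rw [Nat.coprime_comm, Nat.Prime.coprime_iff_not_dvd hp]
  intro hdvd
  apply hx
  have : ZMod.castHom (dvd_pow_self p (by omega : k ≠ 0)) (ZMod p) x = ((x.val : ℕ) : ZMod p) := by
    rw [ZMod.castHom_apply, ZMod.natCast_val]
  rw [this, ZMod.natCast_eq_zero_iff]
  exact hdvd

lemma card_bad_le (hp : p.Prime) (hk : 1 ≤ k) (a1 : ℤ) (ha1 : (a1 : ZMod p) ≠ 0)
    (c : ZMod (p ^ k)) :
    Nat.card {w : (ZMod (p ^ k))ˣ //
      ZMod.castHom (dvd_pow_self p (by omega : k ≠ 0)) (ZMod p)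
        ((a1 : ZMod (p ^ k)) * (w : (ZMod (p^k))ˣ) + c) = 0} ≤ p ^ (k - 1) := by
  haveI : NeZero (p ^ k) := ⟨pow_ne_zero _ hp.pos.ne'⟩
  haveI : NeZero (p ^ (k-1)) := ⟨pow_ne_zero _ hp.pos.ne'⟩
  haveI : Fact p.Prime := ⟨hp⟩
  set φ := ZMod.castHom (dvd_pow_self p (by omega : k ≠ 0)) (ZMod p) with hφ
  have hpk : p ^ (k - 1) * p = p ^ k := by
    rw [← pow_succ]; congr 1; omega
  rw [← Nat.card_zmod (p ^ (k-1))]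
  apply Nat.card_le_card_of_injective
    (f := fun w => ((((w.1 : (ZMod (p^k))ˣ) : ZMod (p^k)).val / p : ℕ) : ZMod (p ^ (k-1))))
  rintro ⟨w, hw⟩ ⟨w', hw'⟩ hww
  simp only at hww
  -- φ w = φ w'
  have h1 : φ ((w : (ZMod (p^k))ˣ) : ZMod (p^k)) = φ ((w' : (ZMod (p^k))ˣ) : ZMod (p^k)) := by
    have e1 : φ (a1 : ZMod (p^k)) * φ ((w : (ZMod (p^k))ˣ) : ZMod (p^k)) = - φ c := by
      have := hw; rw [map_add, map_mul] at this; linear_combination this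
    have e2 : φ (a1 : ZMod (p^k)) * φ ((w' : (ZMod (p^k))ˣ) : ZMod (p^k)) = - φ c := by
      have := hw'; rw [map_add, map_mul] at this; linear_combination this
    have ha : φ (a1 : ZMod (p^k)) ≠ 0 := by
      rw [map_intCast]; exact ha1
    exact mul_left_cancel₀ ha (e1.trans e2.symm)
  -- vals congruent mod p
  set v := ((w : (ZMod (p^k))ˣ) : ZMod (p^k)).val with hv
  set v' := ((w' : (ZMod (p^k))ˣ) : ZMod (p^k)).val with hv'
  have hmodp : v % p = v' % p := by
    have : ((v : ℕ) : ZMod p) = ((v' : ℕ) : ZMod p) := by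
      rw [ZMod.natCast_val, ZMod.natCast_val]
      exact h1
    rwa [ZMod.natCast_eq_natCast_iff] at this
  have hdiv : v / p = v' / p := by
    have hlt : v / p < p ^ (k-1) := by
      apply Nat.div_lt_of_lt_mul
      rw [mul_comm, hpk]
      exact ZMod.val_lt _
    have hlt' : v' / p < p ^ (k-1) := by
      apply Nat.div_lt_of_lt_mul
      rw [mul_comm, hpk]
      exact ZMod.val_lt _
    have := (ZMod.natCast_eq_natCast_iff _ _ _).mp hww
    rwa [Nat.ModEq, Nat.mod_eq_of_lt hlt, Nat.mod_eq_of_lt hlt'] at this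
  have hvv : v = v' := by
    have h4 := Nat.div_add_mod v p
    have h5 := Nat.div_add_mod v' p
    rw [hdiv] at h4
    omega
  apply Subtype.ext
  apply Units.ext
  exact ZMod.val_injective _ hvv


lemma sigma_perm (a : Fin 4 → ℤ) (Q : ℕ) (π : Equiv.Perm (Fin 4)) :
    sigmaA' (fun i => a (π i)) Q = sigmaA' a Q := by
  unfold sigmaA'
  congr 2
  apply Nat.card_congr
  refine Equiv.subtypeEquiv (Equiv.arrowCongr π (Equiv.refl (ZMod Q)ˣ)) ?_
  intro b
  show (∑ i, ((a (π i) : ZMod Q) * _) = 0) ↔ (∑ i, ((a i : ZMod Q) * _) = 0)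
  have : ∀ i : Fin 4, (Equiv.arrowCongr π (Equiv.refl (ZMod Q)ˣ) b) (π i) = b i := by
    intro i
    simp [Equiv.arrowCongr]
  rw [Fintype.sum_equiv π
    (fun i => (a (π i) : ZMod Q) * ((b i : (ZMod Q)ˣ) : ZMod Q))
    (fun j => (a j : ZMod Q) * (((Equiv.arrowCongr π (Equiv.refl (ZMod Q)ˣ) b) j :
      (ZMod Q)ˣ) : ZMod Q))
    (fun i => by rw [this i])]


variable {p k : ℕ}

lemma units_zmod2_eq_one : ∀ z : ZMod 2, IsUnit z → z = 1 := by decide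

lemma sigma_pp_ge (hp : p.Prime) (hk : 1 ≤ k) (a : Fin 4 → ℤ)
    (ha0 : ((a 0 : ℤ) : ZMod p) ≠ 0) (ha1 : ((a 1 : ℤ) : ZMod p) ≠ 0)
    (hsolv : ∃ x : Fin 4 → (ZMod p)ˣ,
      ∑ i, (a i : ZMod p) * ((x i : (ZMod p)ˣ) : ZMod p) = 0) :
    (if p = 2 then (1:ℝ) else 1 - 1/((p:ℝ)-1)^2) ≤ sigmaA' a (p ^ k) := by
  classical
  haveI : NeZero (p ^ k) := ⟨pow_ne_zero _ hp.pos.ne'⟩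
  haveI : Fact p.Prime := ⟨hp⟩
  set q := p ^ k with hq
  let φ : ZMod q →+* ZMod p := ZMod.castHom (dvd_pow_self p (by omega : k ≠ 0)) (ZMod p)
  let U := (ZMod q)ˣ
  let E : (U × U) → U → Prop := fun uv w =>
    φ ((a 1 : ZMod q) * ((w : U) : ZMod q) +
      ((a 2 : ZMod q) * ((uv.1 : U) : ZMod q) + (a 3 : ZMod q) * ((uv.2 : U) : ZMod q))) = 0
  set R : ℕ := if p = 2 then 0 else p ^ (k - 1) with hR
  set T : ℕ := Nat.totient q with hT
  -- bad-set bound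
  have bad_le : ∀ uv : U × U, Nat.card {w : U // E uv w} ≤ R := by
    intro uv
    by_cases h2 : p = 2
    · rw [hR, if_pos h2]
      rw [Nat.le_zero, Nat.card_eq_zero]
      left
      constructor
      rintro ⟨w, hw⟩
      -- in ZMod 2
      obtain ⟨x, hx⟩ := hsolv
      subst h2
      have hone : ∀ u : U, φ ((u : U) : ZMod q) = 1 := by
        intro u
        exact units_zmod2_eq_one _ ((u.isUnit).map φ)
      have hxone : ∀ i, ((x i : (ZMod 2)ˣ) : ZMod 2) = 1 := by
        intro i
        exact units_zmod2_eq_one _ (x i).isUnit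
      rw [Fin.sum_univ_four] at hx
      simp only [hxone, mul_one] at hx
      have hw' : (a 1 : ZMod 2) + ((a 2 : ZMod 2) + (a 3 : ZMod 2)) = 0 := by
        have := hw
        simp only [E, map_add, map_mul, map_intCast, hone, mul_one] at this
        exact this
      apply ha0
      linear_combination hx - hw'
    · rw [hR, if_neg h2]
      exact card_bad_le hp hk (a 1) ha1 _
  have hRT : R ≤ T := by
    rw [hT, hq, Nat.totient_prime_pow hp (by omega : 0 < k)]
    rw [hR]
    by_cases h2 : p = 2
    · simp [h2]
    · rw [if_neg h2]
      have : 1 ≤ p - 1 := by have := hp.two_le; omega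
      calc p ^ (k-1) = p ^ (k-1) * 1 := by ring
        _ ≤ p ^ (k-1) * (p-1) := by exact Nat.mul_le_mul_left _ this
  -- fiber lower bound
  have card_units : Nat.card U = T := by
    rw [Nat.card_eq_fintype_card, ZMod.card_units_eq_totient]
  have fiber_ge : ∀ uv : U × U, T - R ≤ Nat.card {w : U // ¬ E uv w} := by
    intro uv
    have hsplit : Nat.card {w : U // E uv w} + Nat.card {w : U // ¬ E uv w} = T := by
      rw [← card_units, ← Nat.card_sum]
      exact Nat.card_congr (Equiv.sumCompl _)
    have := bad_le uv
    omega
  -- cardinality of domain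
  have cardD : (T ^ 2 * (T - R) : ℕ) ≤ Nat.card {t : (U × U) × U // ¬ E t.1 t.2} := by
    rw [Nat.card_congr (Equiv.subtypeProdEquivSigmaSubtype (fun uv w => ¬ E uv w)),
      nat_card_sigma]
    calc (T^2 * (T - R) : ℕ) = ∑ _uv : U × U, (T - R) := by
          rw [Finset.sum_const, Finset.card_univ, Fintype.card_prod, smul_eq_mul]
          have : Fintype.card U = T := by rw [ZMod.card_units_eq_totient]
          rw [this]; ring
      _ ≤ ∑ uv : U × U, Nat.card {w : U // ¬ E uv w} :=
          Finset.sum_le_sum (fun uv _ => fiber_ge uv)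
  -- injection into sol
  have hA0 : IsUnit ((a 0 : ℤ) : ZMod q) :=
    isUnit_of_cast_ne hp hk _ (by rw [map_intCast]; exact ha0)
  have main : (T ^ 2 * (T - R) : ℕ) ≤ Nat.card (sol q a) := by
    refine le_trans cardD (Nat.card_le_card_of_injective ?_ ?_)
    · rintro ⟨⟨⟨u, v⟩, w⟩, hC⟩
      have hs : IsUnit ((a 1 : ZMod q) * ((w : U) : ZMod q) +
          ((a 2 : ZMod q) * ((u : U) : ZMod q) + (a 3 : ZMod q) * ((v : U) : ZMod q))) :=
        isUnit_of_cast_ne hp hk _ hC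
      refine ⟨![hA0.unit⁻¹ * (-hs.unit), w, u, v], ?_⟩
      show ∑ i, (a i : ZMod q) * _ = 0
      rw [Fin.sum_univ_four]
      have h0 : ((a 0 : ℤ) : ZMod q) * ((hA0.unit⁻¹ * (-hs.unit) : U) : ZMod q) =
          -((a 1 : ZMod q) * ((w : U) : ZMod q) +
            ((a 2 : ZMod q) * ((u : U) : ZMod q) + (a 3 : ZMod q) * ((v : U) : ZMod q))) := by
        have h1 : ((a 0 : ℤ) : ZMod q) * ((hA0.unit⁻¹ : U) : ZMod q) = 1 :=
          hA0.mul_val_inv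
        rw [Units.val_mul, ← mul_assoc, h1, one_mul, Units.val_neg, IsUnit.unit_spec]
      simp only [Matrix.cons_val_zero, Matrix.cons_val_one, Matrix.head_cons,
        Matrix.cons_val_two, Matrix.tail_cons, Matrix.cons_val_three]
      rw [h0]
      ring
    · rintro ⟨⟨⟨u, v⟩, w⟩, hC⟩ ⟨⟨⟨u', v'⟩, w'⟩, hC'⟩ hFF
      have hvals := congrArg (fun z => (z : Fin 4 → U)) (Subtype.ext_iff.mp hFF)
      simp only at hvals
      have e1 := congrFun hvals 1
      have e2 := congrFun hvals 2
      have e3 := congrFun hvals 3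
      simp only [Matrix.cons_val_one, Matrix.head_cons, Matrix.cons_val_two,
        Matrix.tail_cons, Matrix.cons_val_three] at e1 e2 e3
      apply Subtype.ext
      simp only [Prod.mk.injEq]
      exact ⟨⟨e2, e3⟩, e1⟩
  -- final arithmetic
  have tot_pos : 0 < T := by
    rw [hT]; exact Nat.totient_pos.mpr (NeZero.pos q)
  have hcast : ((T ^ 2 * (T - R) : ℕ) : ℝ) = (T : ℝ) ^ 2 * ((T : ℝ) - (R : ℝ)) := by
    rw [Nat.cast_mul, Nat.cast_pow, Nat.cast_sub hRT]
  have step : (q : ℝ) / (T : ℝ) ^ 4 * ((T : ℝ) ^ 2 * ((T : ℝ) - (R : ℝ))) ≤ sigmaA' a q := by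
    unfold sigmaA'
    rw [← hT]
    have hnn : (0:ℝ) ≤ (q : ℝ) / (T : ℝ) ^ 4 :=
      div_nonneg (Nat.cast_nonneg q) (pow_nonneg (Nat.cast_nonneg T) 4)
    exact mul_le_mul_of_nonneg_left (by rw [← hcast]; exact_mod_cast main) hnn
  refine le_trans ?_ step
  obtain ⟨j, rfl⟩ : ∃ j, k = j + 1 := ⟨k - 1, by omega⟩
  have htot : (T : ℝ) = (p : ℝ) ^ j * ((p : ℝ) - 1) := by
    rw [hT, hq, Nat.totient_prime_pow hp (by omega : 0 < j + 1)]
    push_cast [Nat.cast_sub hp.one_le]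
    ring_nf
  have hqc : ((q : ℕ) : ℝ) = (p : ℝ) ^ (j + 1) := by rw [hq]; push_cast; ring
  have hpj : (0:ℝ) < (p:ℝ) ^ j := pow_pos (by exact_mod_cast hp.pos) j
  by_cases h2 : p = 2
  · rw [if_pos h2]
    have hRc : (R : ℝ) = 0 := by rw [hR, if_pos h2]; norm_num
    have hP1 : (p:ℝ) - 1 = 1 := by rw [h2]; norm_num
    refine le_trans (Nat.one_le_cast.mpr hp.one_lt.le : (1:ℝ) ≤ (p:ℝ)) (le_of_eq ?_)
    rw [hRc, htot, hqc, hP1]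
    have hpne : (p:ℝ) ≠ 0 := by rw [h2]; norm_num
    field_simp
    ring
  · rw [if_neg h2, hR, if_neg h2]
    have hp3 : 3 ≤ p := by have := hp.two_le; omega
    have hP3 : (3:ℝ) ≤ (p:ℝ) := by exact_mod_cast hp3
    have hP1 : (p:ℝ) - 1 ≠ 0 := by linarith
    have hRc : ((p ^ ((j+1) - 1) : ℕ) : ℝ) = (p:ℝ) ^ j := by push_cast; norm_num
    rw [hRc, htot, hqc]
    apply le_of_eq
    field_simp
    ring

lemma exists_two_units (hp : p.Prime) (a : Fin 4 → ℤ) (hgcd : Finset.univ.gcd a = 1)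
    (hsolv : ∃ x : Fin 4 → (ZMod p)ˣ,
      ∑ i, (a i : ZMod p) * ((x i : (ZMod p)ˣ) : ZMod p) = 0) :
    ∃ i j : Fin 4, i ≠ j ∧ ((a i : ℤ) : ZMod p) ≠ 0 ∧ ((a j : ℤ) : ZMod p) ≠ 0 := by
  haveI : Fact p.Prime := ⟨hp⟩
  have hex : ∃ i, ((a i : ℤ) : ZMod p) ≠ 0 := by
    by_contra hcon
    push_neg at hcon
    have : (p : ℤ) ∣ Finset.univ.gcd a := Finset.dvd_gcd (fun i _ =>
      (ZMod.intCast_zmod_eq_zero_iff_dvd _ _).mp (hcon i))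
    rw [hgcd] at this
    have := Int.le_of_dvd one_pos this
    have := hp.one_lt
    omega
  obtain ⟨i, hi⟩ := hex
  by_contra hcon
  push_neg at hcon
  have hz : ∀ j, j ≠ i → ((a j : ℤ) : ZMod p) = 0 := by
    intro j hj
    by_contra hjz
    exact hjz (hcon i j (Ne.symm hj) hi)
  obtain ⟨x, hx⟩ := hsolv
  have : ∑ j, (a j : ZMod p) * ((x j : (ZMod p)ˣ) : ZMod p)
      = (a i : ZMod p) * ((x i : (ZMod p)ˣ) : ZMod p) := by
    apply Finset.sum_eq_single i
    · intro j _ hj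
      rw [hz j hj, zero_mul]
    · intro h
      exact absurd (Finset.mem_univ i) h
  rw [this] at hx
  rcases mul_eq_zero.mp hx with h | h
  · exact hi h
  · exact (x i).ne_zero h

lemma sigma_pp_ge' (hp : p.Prime) (hk : 1 ≤ k) (a : Fin 4 → ℤ)
    (hgcd : Finset.univ.gcd a = 1)
    (hsolv : ∃ x : Fin 4 → (ZMod p)ˣ,
      ∑ i, (a i : ZMod p) * ((x i : (ZMod p)ˣ) : ZMod p) = 0) :
    (if p = 2 then (1:ℝ) else 1 - 1/((p:ℝ)-1)^2) ≤ sigmaA' a (p ^ k) := by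
  obtain ⟨i, j, hij, hi, hj⟩ := exists_two_units hp a hgcd hsolv
  let π₁ := Equiv.swap (0 : Fin 4) i
  set j' := π₁.symm j with hj'
  have hj'0 : j' ≠ 0 := by
    intro h
    apply hij
    have : π₁ j' = j := Equiv.apply_symm_apply _ _
    rw [h] at this
    rw [← this]
    simp [π₁]
  set π : Equiv.Perm (Fin 4) := π₁ * Equiv.swap 1 j' with hπ
  have hπ0 : π 0 = i := by
    rw [hπ]
    simp only [Equiv.Perm.mul_apply]
    rw [Equiv.swap_apply_of_ne_of_ne (by decide) (Ne.symm hj'0)]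
    simp [π₁]
  have hπ1 : π 1 = j := by
    rw [hπ]
    simp only [Equiv.Perm.mul_apply]
    rw [Equiv.swap_apply_left]
    exact Equiv.apply_symm_apply _ _
  have hs' : ∃ x : Fin 4 → (ZMod p)ˣ,
      ∑ t, ((a (π t) : ℤ) : ZMod p) * ((x t : (ZMod p)ˣ) : ZMod p) = 0 := by
    obtain ⟨x, hx⟩ := hsolv
    refine ⟨fun t => x (π t), ?_⟩
    rw [Fintype.sum_equiv π
      (fun t => ((a (π t) : ℤ) : ZMod p) * ((x (π t) : (ZMod p)ˣ) : ZMod p))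
      (fun s => ((a s : ℤ) : ZMod p) * ((x s : (ZMod p)ˣ) : ZMod p))
      (fun t => rfl)]
    exact hx
  have := sigma_pp_ge hp hk (fun t => a (π t)) (by show ((a (π 0) : ℤ) : ZMod p) ≠ 0; rw [hπ0]; exact hi)
    (by show ((a (π 1) : ℤ) : ZMod p) ≠ 0; rw [hπ1]; exact hj) hs'
  rwa [sigma_perm a (p ^ k) π] at this


lemma prod_Icc_eval (n : ℕ) (hn : 2 ≤ n) :
    ∏ m ∈ Finset.Icc 2 n, (1 - 1/((m:ℝ))^2) = ((n:ℝ)+1)/(2*n) := by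
  induction n, hn using Nat.le_induction with
  | base => norm_num
  | succ n hn ih =>
    rw [Finset.prod_Icc_succ_top (by omega : 2 ≤ n + 1), ih]
    have h1 : (0:ℝ) < (n:ℝ) := by exact_mod_cast (by omega : 0 < n)
    have h2 : (0:ℝ) < (n:ℝ) + 1 := by linarith
    push_cast
    field_simp
    ring

lemma prod_Icc_ge (n : ℕ) : (1/2 : ℝ) ≤ ∏ m ∈ Finset.Icc 2 n, (1 - 1/((m:ℝ))^2) := by
  by_cases hn : 2 ≤ n
  · rw [prod_Icc_eval n hn]
    have h1 : (0:ℝ) < (n:ℝ) := by exact_mod_cast (by omega : 0 < n)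
    rw [le_div_iff₀ (by linarith)]
    linarith
  · rw [Finset.Icc_eq_empty (by omega)]
    norm_num

lemma factor_bounds {m : ℕ} (hm : 2 ≤ m) :
    0 ≤ 1 - 1/((m:ℝ))^2 ∧ 1 - 1/((m:ℝ))^2 ≤ 1 := by
  have h1 : (2:ℝ) ≤ (m:ℝ) := by exact_mod_cast hm
  have h2 : (1:ℝ) ≤ (m:ℝ)^2 := by nlinarith
  have h3 : (0:ℝ) < (m:ℝ)^2 := by nlinarith
  constructor
  · have : 1/((m:ℝ))^2 ≤ 1 := by rw [div_le_one h3]; linarith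
    linarith
  · have : 0 < 1/((m:ℝ))^2 := by positivity
    linarith

lemma prime_prod_ge (n : ℕ) :
    (1/2 : ℝ) ≤ ∏ p ∈ Finset.filter Nat.Prime (Finset.range (n+1)),
      (if p = 2 then (1:ℝ) else 1 - 1/((p:ℝ)-1)^2) := by
  classical
  set P := Finset.filter Nat.Prime (Finset.range (n+1)) with hP
  set P' := P.filter (fun p => p ≠ 2) with hP'
  set S : Finset ℕ := P'.image (fun p => p - 1) with hS
  have hsub : P' ⊆ P := Finset.filter_subset _ _
  have hmem : ∀ p ∈ P', 3 ≤ p ∧ p ≤ n := by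
    intro p hp
    rw [hP', Finset.mem_filter, hP, Finset.mem_filter, Finset.mem_range] at hp
    obtain ⟨⟨hr, hpr⟩, hne⟩ := hp
    have h2 := hpr.two_le
    exact ⟨by omega, by omega⟩
  have e1 : ∏ p ∈ P', (if p = 2 then (1:ℝ) else 1 - 1/((p:ℝ)-1)^2)
      = ∏ p ∈ P, (if p = 2 then (1:ℝ) else 1 - 1/((p:ℝ)-1)^2) := by
    apply Finset.prod_subset hsub
    intro x hx hx'
    have hx2 : x = 2 := by
      by_contra hne
      exact hx' (Finset.mem_filter.mpr ⟨hx, hne⟩)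
    rw [if_pos hx2]
  have e2 : ∏ p ∈ P', (if p = 2 then (1:ℝ) else 1 - 1/((p:ℝ)-1)^2)
      = ∏ m ∈ S, (1 - 1/((m:ℝ))^2) := by
    rw [hS, Finset.prod_image]
    · apply Finset.prod_congr rfl
      intro p hp
      have h3 := (hmem p hp).1
      rw [if_neg (by omega)]
      have hc : ((p - 1 : ℕ) : ℝ) = (p:ℝ) - 1 := by
        push_cast [Nat.cast_sub (by omega : 1 ≤ p)]; ring
      rw [hc]
    · intro x hx y hy hxy
      have := (hmem x hx).1
      have := (hmem y hy).1
      simp only at hxy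
      omega
  have himg : S ⊆ Finset.Icc 2 n := by
    intro m hm
    rw [hS, Finset.mem_image] at hm
    obtain ⟨p, hp, rfl⟩ := hm
    have := hmem p hp
    rw [Finset.mem_Icc]
    omega
  have e3 : ∏ m ∈ Finset.Icc 2 n, (1 - 1/((m:ℝ))^2) ≤ ∏ m ∈ S, (1 - 1/((m:ℝ))^2) := by
    rw [← Finset.prod_sdiff himg]
    apply mul_le_of_le_one_left
    · apply Finset.prod_nonneg
      intro m hm
      exact (factor_bounds (Finset.mem_Icc.mp (himg hm)).1).1
    · apply Finset.prod_le_one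
      · intro m hm
        exact (factor_bounds (Finset.mem_Icc.mp (Finset.mem_sdiff.mp hm).1).1).1
      · intro m hm
        exact (factor_bounds (Finset.mem_Icc.mp (Finset.mem_sdiff.mp hm).1).1).2
  calc (1/2 : ℝ) ≤ ∏ m ∈ Finset.Icc 2 n, (1 - 1/((m:ℝ))^2) := prod_Icc_ge n
    _ ≤ ∏ m ∈ S, (1 - 1/((m:ℝ))^2) := e3
    _ = ∏ p ∈ P', (if p = 2 then (1:ℝ) else 1 - 1/((p:ℝ)-1)^2) := e2.symm
    _ = ∏ p ∈ P, (if p = 2 then (1:ℝ) else 1 - 1/((p:ℝ)-1)^2) := e1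


lemma g_nonneg {p : ℕ} (hp : p.Prime) :
    0 ≤ (if p = 2 then (1:ℝ) else 1 - 1/((p:ℝ)-1)^2) := by
  by_cases h2 : p = 2
  · rw [if_pos h2]; norm_num
  · rw [if_neg h2]
    have h3 : 3 ≤ p := by have := hp.two_le; omega
    have hc : ((p - 1 : ℕ) : ℝ) = (p:ℝ) - 1 := by
      push_cast [Nat.cast_sub (by omega : 1 ≤ p)]; ring
    rw [← hc]
    exact (factor_bounds (by omega)).1

end SSLB

/-- Lemma 5.6: the truncated singular series is bounded from below: there is `C > 0`
with `𝔖_a(B) ≥ C` for every locally solvable `a` and all sufficiently large `B`. -/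
theorem singular_series_lower_bound :
    ∃ C > (0 : ℝ), ∀ a : Fin 4 → ℤ, IsLocSolv a →
      ∃ B₀ : ℝ, ∀ B : ℝ, B₀ ≤ B → C ≤ Sfrak a B := by
  refine ⟨1/2, by norm_num, ?_⟩
  intro a ha
  refine ⟨0, fun B _ => ?_⟩
  obtain ⟨⟨hnz, hgcd⟩, hsign, hsolv⟩ := ha
  have key : Sfrak a B = SSLB.sigmaA' a (WB B) := rfl
  rw [key, WB]
  rw [SSLB.sigmaA'_prod a _ (fun p hp => (Finset.mem_filter.mp hp).2)
      (fun p => ⌈Real.log (wB B) / Real.log (p : ℝ)⌉₊ + 1)]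
  calc (1/2:ℝ) ≤ ∏ p ∈ Finset.filter Nat.Prime (Finset.range (⌊wB B⌋₊ + 1)),
        (if p = 2 then (1:ℝ) else 1 - 1/((p:ℝ)-1)^2) := SSLB.prime_prod_ge _
    _ ≤ ∏ p ∈ Finset.filter Nat.Prime (Finset.range (⌊wB B⌋₊ + 1)),
        SSLB.sigmaA' a (p ^ (⌈Real.log (wB B) / Real.log (p : ℝ)⌉₊ + 1)) := by
        apply Finset.prod_le_prod
        · intro p hp
          exact SSLB.g_nonneg (Finset.mem_filter.mp hp).2
        · intro p hp
          have hpp := (Finset.mem_filter.mp hp).2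
          exact SSLB.sigma_pp_ge' hpp (by omega) a hgcd (hsolv p hpp)
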